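/- Let q - 1 = ds with d ≥ 3, let a_0, a_1 ∈ F_q^*, r_0, r_1 positive integers, and define f(x) = (1/d)(a_0 x^{r_0} - a_1 x^{r_1})(1 + x^s + ⋯ + x^{(d-1)s}) + a_1 x^{r_1}. Then f is a permutation of F_q if and only if gcd(r_0 r_1, s) = 1, gcd(r_1, d) = 1, and a_0^s = a_1^s. -/

import Mathlib

lemma key_pow_inj {F : Type*} [Field F] (n N : ℕ) (hco : Nat.gcd n N = 1)
    (x y : F) (hx : x ^ N = 1) (hy : y ^ N = 1) (hxy : x ^ n = y ^ n) : x = y := by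
  rcases Nat.eq_zero_or_pos N with hN | hN
  · subst hN
    rw [Nat.gcd_zero_right] at hco
    subst hco
    simpa using hxy
  · have hx0 : x ≠ 0 := by
      rintro rfl
      rw [zero_pow hN.ne'] at hx
      exact zero_ne_one hx
    have hy0 : y ≠ 0 := by
      rintro rfl
      rw [zero_pow hN.ne'] at hy
      exact zero_ne_one hy
    set u : Fˣ := Units.mk0 x hx0 with hu
    set v : Fˣ := Units.mk0 y hy0 with hv
    have hxu : (u : F) = x := rfl
    have hyu : (v : F) = y := rfl
    have huN : u ^ N = 1 := by
      ext; rw [Units.val_pow_eq_pow_val]; exact hx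
    have hvN : v ^ N = 1 := by
      ext; rw [Units.val_pow_eq_pow_val]; exact hy
    have huv : u ^ n = v ^ n := by
      ext; rw [Units.val_pow_eq_pow_val, Units.val_pow_eq_pow_val]; exact hxy
    have hbez : (1 : ℤ) = n * Nat.gcdA n N + N * Nat.gcdB n N := by
      have := Nat.gcd_eq_gcd_ab n N
      rw [hco] at this
      exact_mod_cast this
    have : u = v := by
      calc u = u ^ (1 : ℤ) := (zpow_one u).symm
        _ = (u ^ (n : ℤ)) ^ Nat.gcdA n N * (u ^ (N : ℤ)) ^ Nat.gcdB n N := by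
              rw [← zpow_mul, ← zpow_mul, ← zpow_add, ← hbez]
        _ = (v ^ (n : ℤ)) ^ Nat.gcdA n N * (v ^ (N : ℤ)) ^ Nat.gcdB n N := by
              rw [zpow_natCast, zpow_natCast, zpow_natCast, zpow_natCast, huv, huN, hvN]
        _ = v ^ ((n : ℤ) * Nat.gcdA n N + N * Nat.gcdB n N) := by
              rw [← zpow_mul, ← zpow_mul, ← zpow_add]
        _ = v := by rw [← hbez, zpow_one]
    rw [← hxu, ← hyu, this]

theorem two_branch_pp_criterion
    (F : Type*) [Field F] [Fintype F] (q d s : ℕ)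
    (hq : Fintype.card F = q)
    (hd : 3 ≤ d) (hs : 0 < s) (hds : q - 1 = d * s)
    (a0 a1 : F) (ha0 : a0 ≠ 0) (ha1 : a1 ≠ 0)
    (r0 r1 : ℕ) (hr0 : 0 < r0) (hr1 : 0 < r1)
    (f : F → F)
    (hf : ∀ x : F, f x = (d : F)⁻¹ * (a0 * x ^ r0 - a1 * x ^ r1) *
            (∑ j ∈ Finset.range d, x ^ (j * s)) + a1 * x ^ r1) :
    Function.Bijective f ↔
      Nat.gcd (r0 * r1) s = 1 ∧ Nat.gcd r1 d = 1 ∧ a0 ^ s = a1 ^ s := by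
  classical
  have hq1 : 1 ≤ q := by rw [← hq]; exact Fintype.card_pos
  have hd0 : 0 < d := by omega
  -- (d : F) ≠ 0
  have hcast : ((d : F)) * (s : F) = -1 := by
    have h1 : ((q - 1 : ℕ) : F) = (q : F) - 1 := by
      push_cast [Nat.cast_sub hq1]; ring
    have h2 : ((q : ℕ) : F) = 0 := by
      rw [← hq]; exact FiniteField.cast_card_eq_zero F
    have := congrArg (Nat.cast : ℕ → F) hds
    rw [h1, h2, Nat.cast_mul] at this
    rw [← this]; ring
  have hdF : (d : F) ≠ 0 := by
    intro h
    rw [h, zero_mul] at hcast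
    exact one_ne_zero (by linear_combination hcast : (1:F) = 0)
  -- x^(d*s) = 1 for x ≠ 0
  have hpow1 : ∀ x : F, x ≠ 0 → x ^ (d * s) = 1 := by
    intro x hx
    rw [← hds, ← hq]
    exact FiniteField.pow_card_sub_one_eq_one x hx
  -- branch values
  have hfA : ∀ x : F, x ^ s = 1 → f x = a0 * x ^ r0 := by
    intro x hx
    have hsum : (∑ j ∈ Finset.range d, x ^ (j * s)) = (d : F) := by
      rw [Finset.sum_congr rfl (fun j _ => by rw [pow_mul', hx, one_pow])]
      simp
    rw [hf x, hsum]
    field_simp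
    ring
  have hfB : ∀ x : F, x ≠ 0 → x ^ s ≠ 1 → f x = a1 * x ^ r1 := by
    intro x hx hxs
    have hsum : (∑ j ∈ Finset.range d, x ^ (j * s)) = 0 := by
      have hgeo := geom_sum_mul (x ^ s) d
      have hxd : (x ^ s) ^ d = 1 := by
        rw [← pow_mul, mul_comm]; exact hpow1 x hx
      rw [hxd, sub_self] at hgeo
      have hne : x ^ s - 1 ≠ 0 := sub_ne_zero.mpr hxs
      have := mul_eq_zero.mp hgeo
      rcases this with h | h
      · rw [← h]
        exact Finset.sum_congr rfl (fun j _ => by rw [pow_mul'])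
      · exact absurd h hne
    rw [hf x, hsum]
    ring
  have hf0 : f 0 = 0 := by
    rw [hf 0, zero_pow hr0.ne', zero_pow hr1.ne']
    ring
  have hfne : ∀ x : F, x ≠ 0 → f x ≠ 0 := by
    intro x hx
    by_cases hxs : x ^ s = 1
    · rw [hfA x hxs]; exact mul_ne_zero ha0 (pow_ne_zero _ hx)
    · rw [hfB x hx hxs]; exact mul_ne_zero ha1 (pow_ne_zero _ hx)
  constructor
  · intro hbij
    have hinj := hbij.injective
    have hsurj := hbij.surjective
    obtain ⟨g, hg⟩ := IsCyclic.exists_generator (α := Fˣ)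
    have horder : orderOf g = d * s := by
      rw [orderOf_eq_card_of_forall_mem_zpowers hg, Nat.card_eq_fintype_card,
        Fintype.card_units, hq, hds]
    set G : F := (g : F) with hGdef
    have hG0 : G ≠ 0 := Units.ne_zero g
    have hGpow : ∀ n : ℕ, G ^ n = 1 ↔ d * s ∣ n := by
      intro n
      rw [hGdef, ← Units.val_pow_eq_pow_val, Units.val_eq_one,
        ← orderOf_dvd_iff_pow_eq_one, horder]
    have hkey1 : ∀ e r : ℕ, e ∣ s → e ∣ r → (d * (s / e)) * r = (d * s) * (r / e) := by
      intro e r hes her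
      rw [mul_assoc, mul_assoc]
      congr 1
      conv_lhs => rw [← Nat.mul_div_cancel' her]
      rw [← mul_assoc, Nat.div_mul_cancel hes]
    have hMnd : ∀ e : ℕ, 1 < e → e ∣ s → ¬ d * s ∣ d * (s / e) := by
      intro e he2 hes h
      have h1 : s ∣ s / e := (Nat.mul_dvd_mul_iff_left hd0).mp h
      have h2 : s / e < s := Nat.div_lt_self hs he2
      have h3 : e * (s / e) = s := Nat.mul_div_cancel' hes
      rcases Nat.eq_zero_or_pos (s / e) with h0 | hp
      · rw [h0, Nat.mul_zero] at h3
        omega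
      · exact absurd (Nat.le_of_dvd hp h1) (not_le.mpr h2)
    -- gcd r0 s = 1
    have hA : Nat.gcd r0 s = 1 := by
      by_contra he1
      set e := Nat.gcd r0 s with he
      have hes : e ∣ s := Nat.gcd_dvd_right r0 s
      have her : e ∣ r0 := Nat.gcd_dvd_left r0 s
      have he0 : 0 < e := Nat.gcd_pos_of_pos_right r0 hs
      have he2 : 1 < e := by omega
      set M := d * (s / e) with hM
      have hxr0 : (G ^ M) ^ r0 = 1 := by
        rw [← pow_mul, hGpow, hkey1 e r0 hes her]
        exact Dvd.intro _ rfl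
      have hxs : (G ^ M) ^ s = 1 := by
        rw [← pow_mul, hGpow, hM]
        exact ⟨s / e, by ring⟩
      have hxne : G ^ M ≠ 1 := by
        intro h
        rw [hGpow] at h
        exact hMnd e he2 hes h
      apply hxne
      apply hinj
      rw [hfA _ hxs, hfA 1 (one_pow s), hxr0, one_pow]
    -- gcd r1 s = 1
    have hBs : Nat.gcd r1 s = 1 := by
      by_contra he1
      set e := Nat.gcd r1 s with he
      have hes : e ∣ s := Nat.gcd_dvd_right r1 s
      have her : e ∣ r1 := Nat.gcd_dvd_left r1 s
      have he0 : 0 < e := Nat.gcd_pos_of_pos_right r1 hs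
      have he2 : 1 < e := by omega
      set M := d * (s / e) with hM
      have hGM : G ^ (M * r1) = 1 := by
        rw [hGpow, hkey1 e r1 hes her]
        exact Dvd.intro _ rfl
      have hxB : G ^ s ≠ 1 := by
        rw [ne_eq, hGpow]
        intro h
        have : d ∣ 1 := (Nat.mul_dvd_mul_iff_right hs).mp (by simpa using h)
        have := Nat.le_of_dvd one_pos this
        omega
      have hyB : (G ^ (1 + M)) ^ s ≠ 1 := by
        rw [ne_eq, ← pow_mul, hGpow]
        intro h
        have hd1M : d ∣ 1 + M := (Nat.mul_dvd_mul_iff_right hs).mp h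
        have hdM : d ∣ M := Dvd.intro _ rfl
        have : d ∣ 1 := by
          have := Nat.dvd_sub hd1M hdM
          simpa using this
        have := Nat.le_of_dvd one_pos this
        omega
      have heq : f G = f (G ^ (1 + M)) := by
        rw [hfB G hG0 hxB, hfB _ (pow_ne_zero _ hG0) hyB, ← pow_mul,
          add_mul, one_mul, pow_add, hGM, mul_one]
      have := hinj heq
      have hGM1 : G ^ M = 1 := by
        have h1 : G * 1 = G * G ^ M := by
          rw [mul_one]
          calc G = G ^ (1 + M) := this
            _ = G * G ^ M := by rw [pow_add, pow_one]
        exact (mul_left_cancel₀ hG0 h1).symm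
      rw [hGpow] at hGM1
      exact hMnd e he2 hes hGM1
    -- gcd r1 d = 1
    have hC : Nat.gcd r1 d = 1 := by
      by_contra he1
      set e := Nat.gcd r1 d with he
      have hed : e ∣ d := Nat.gcd_dvd_right r1 d
      have her : e ∣ r1 := Nat.gcd_dvd_left r1 d
      have he0 : 0 < e := Nat.gcd_pos_of_pos_right r1 hd0
      have he2 : 1 < e := by omega
      set N := (d / e) * s with hN
      have hNr1 : N * r1 = (d * s) * (r1 / e) := by
        rw [hN]
        conv_lhs => rw [← Nat.mul_div_cancel' her]
        calc d / e * s * (e * (r1 / e)) = d / e * e * (s * (r1 / e)) := by ring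
          _ = d * (s * (r1 / e)) := by rw [Nat.div_mul_cancel hed]
          _ = (d * s) * (r1 / e) := by ring
      have hGN : G ^ (N * r1) = 1 := by
        rw [hGpow, hNr1]
        exact Dvd.intro _ rfl
      have hdN : ¬ d ∣ N := by
        intro h
        have hd_e : 0 < d / e := Nat.div_pos (Nat.le_of_dvd hd0 hed) (by omega)
        have h2 : (d / e) * e ∣ (d / e) * s := by
          rw [Nat.div_mul_cancel hed]
          exact h
        have hesd : e ∣ s := (Nat.mul_dvd_mul_iff_left hd_e).mp h2
        have : e = 1 := Nat.Coprime.eq_one_of_dvd (Nat.Coprime.coprime_dvd_left her hBs) hesd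
        omega
      have ha : ∃ a : ℕ, ¬ d ∣ a ∧ ¬ d ∣ (a + N) := by
        by_cases hc : d ∣ 1 + N
        · refine ⟨2, ?_, ?_⟩
          · intro h
            have := Nat.le_of_dvd (by omega) h
            omega
          · intro h
            have : d ∣ 1 := by
              have := Nat.dvd_sub h hc
              simpa [Nat.add_comm] using this
            have := Nat.le_of_dvd one_pos this
            omega
        · refine ⟨1, ?_, hc⟩
          intro h
          have := Nat.le_of_dvd one_pos h
          omega
      obtain ⟨a, ha1, ha2⟩ := ha
      have hxB : (G ^ a) ^ s ≠ 1 := by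
        rw [ne_eq, ← pow_mul, hGpow]
        intro h
        exact ha1 ((Nat.mul_dvd_mul_iff_right hs).mp h)
      have hyB : (G ^ (a + N)) ^ s ≠ 1 := by
        rw [ne_eq, ← pow_mul, hGpow]
        intro h
        exact ha2 ((Nat.mul_dvd_mul_iff_right hs).mp h)
      have heq : f (G ^ a) = f (G ^ (a + N)) := by
        rw [hfB _ (pow_ne_zero _ hG0) hxB, hfB _ (pow_ne_zero _ hG0) hyB,
          ← pow_mul, ← pow_mul, add_mul, pow_add, hGN, mul_one]
      have hGeq := hinj heq
      have hGN1 : G ^ N = 1 := by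
        have h1 : G ^ a * 1 = G ^ a * G ^ N := by
          rw [mul_one]
          calc G ^ a = G ^ (a + N) := hGeq
            _ = G ^ a * G ^ N := pow_add G a N
        exact (mul_left_cancel₀ (pow_ne_zero _ hG0) h1).symm
      rw [hGpow] at hGN1
      exact hdN (dvd_trans (dvd_mul_right d s) hGN1)
    -- a0^s = a1^s
    have hD : a0 ^ s = a1 ^ s := by
      obtain ⟨x, hx⟩ := hsurj a1
      by_cases hx0 : x = 0
      · rw [hx0, hf0] at hx
        exact absurd hx.symm ha1
      by_cases hxs : x ^ s = 1
      · rw [hfA x hxs] at hx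
        have := congrArg (· ^ s) hx
        rw [mul_pow, ← pow_mul, mul_comm r0 s, pow_mul, hxs, one_pow, mul_one] at this
        exact this
      · exfalso
        rw [hfB x hx0 hxs] at hx
        have hxr1 : x ^ r1 = 1 := mul_left_cancel₀ ha1 (by rw [hx, mul_one])
        have hco : Nat.gcd r1 (d * s) = 1 := Nat.Coprime.mul_right hC hBs
        have hx1 : x = 1 := key_pow_inj r1 (d * s) hco x 1 (hpow1 x hx0) (one_pow _)
          (by rw [one_pow, hxr1])
        rw [hx1, one_pow] at hxs
        exact hxs rfl
    exact ⟨Nat.Coprime.mul hA hBs, hC, hD⟩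
  · rintro ⟨h1, h2, h3⟩
    have hr0s : Nat.Coprime r0 s := Nat.Coprime.coprime_dvd_left (dvd_mul_right r0 r1) h1
    have hr1s : Nat.Coprime r1 s := Nat.Coprime.coprime_dvd_left (dvd_mul_left r1 r0) h1
    have hr1q : Nat.gcd r1 (d * s) = 1 := Nat.Coprime.mul_right h2 hr1s
    rw [← Finite.injective_iff_bijective]
    intro x y hxy
    by_cases hx : x = 0
    · subst hx
      by_contra hy
      exact hfne y (Ne.symm hy) (by rw [← hxy, hf0])
    by_cases hy : y = 0
    · subst hy
      exact absurd (by rw [hxy, hf0]) (hfne x hx)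
    by_cases hxs : x ^ s = 1 <;> by_cases hys : y ^ s = 1
    · -- both in A
      rw [hfA x hxs, hfA y hys] at hxy
      exact key_pow_inj r0 s hr0s x y hxs hys (mul_left_cancel₀ ha0 hxy)
    · -- x in A, y in B
      exfalso
      rw [hfA x hxs, hfB y hy hys] at hxy
      have hA : (a0 * x ^ r0) ^ s = a1 ^ s * 1 := by
        rw [mul_pow, ← pow_mul, mul_comm r0 s, pow_mul, hxs, one_pow, mul_one, h3, mul_one]
      have hB : (a1 * y ^ r1) ^ s = a1 ^ s * (y ^ s) ^ r1 := by
        rw [mul_pow, ← pow_mul, mul_comm r1 s, pow_mul]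
      have hys1 : (y ^ s) ^ r1 = 1 :=
        (mul_left_cancel₀ (pow_ne_zero s ha1) (by rw [← hA, ← hB, hxy])).symm
      have hysd : (y ^ s) ^ d = 1 := by
        rw [← pow_mul, mul_comm s d]; exact hpow1 y hy
      exact hys (key_pow_inj r1 d h2 (y ^ s) 1 hysd (one_pow d) (by rw [one_pow]; exact hys1))
    · -- x in B, y in A
      exfalso
      rw [hfB x hx hxs, hfA y hys] at hxy
      have hA : (a0 * y ^ r0) ^ s = a1 ^ s * 1 := by
        rw [mul_pow, ← pow_mul, mul_comm r0 s, pow_mul, hys, one_pow, mul_one, h3, mul_one]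
      have hB : (a1 * x ^ r1) ^ s = a1 ^ s * (x ^ s) ^ r1 := by
        rw [mul_pow, ← pow_mul, mul_comm r1 s, pow_mul]
      have hxs1 : (x ^ s) ^ r1 = 1 :=
        (mul_left_cancel₀ (pow_ne_zero s ha1) (by rw [← hA, ← hB, hxy])).symm
      have hxsd : (x ^ s) ^ d = 1 := by
        rw [← pow_mul, mul_comm s d]; exact hpow1 x hx
      exact hxs (key_pow_inj r1 d h2 (x ^ s) 1 hxsd (one_pow d) (by rw [one_pow]; exact hxs1))
    · -- both in B
      rw [hfB x hx hxs, hfB y hy hys] at hxy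
      exact key_pow_inj r1 (d * s) hr1q x y (hpow1 x hx) (hpow1 y hy)
        (mul_left_cancel₀ ha1 hxy)
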